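/- Let (Ω, 𝓕) be a measurable space, let l ≤ m be positive natural numbers, let μ₁, …, μ_l be pairwise distinct probability measures on Ω with weights a₁, …, a_l > 0 summing to 1, and let ν₁, …, ν_m be pairwise distinct probability measures on Ω with weights b₁, …, b_m > 0 summing to 1. If ∑_{i=1}^{l} a_i · μ_i^{×(2m−1)} = ∑_{j=1}^{m} b_j · ν_j^{×(2m−1)} as measures on Ω^{2m−1}, then l = m and there exists a permutation ψ of {1,…,m} such that ν_{ψ(i)} = μ_i and b_{ψ(i)} = a_i for every i. (Equivalently: every mixture of measures with m components is (2m−1)-identifiable.) -/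
import Mathlib


open MeasureTheory

open Finset

lemma tensor_indep {X : Type*} (e : X) :
    ∀ (k : ℕ) (f : Fin k → X → ℝ), Function.Injective f → (∀ i, f i e = 1) →
    ∀ (n : ℕ), k ≤ n + 1 → ∀ (c : Fin k → ℝ),
    (∀ x : Fin n → X, ∑ i, c i * ∏ t, f i (x t) = 0) → ∀ i, c i = 0 := by
  intro k
  induction k with
  | zero => exact fun f _ _ n _ c _ i => i.elim0
  | succ k ih =>
    intro f hf hfe n hn c hc
    have hcast : ∀ i : Fin k, c i.castSucc = 0 := by
      intro i
      obtain ⟨n', rfl⟩ : ∃ n', n = n' + 1 := by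
        cases n with
        | zero => exact absurd i.is_lt (by omega)
        | succ n' => exact ⟨n', rfl⟩
      have key : ∀ y : X, ∀ j : Fin k,
          (c j.castSucc * (f j.castSucc y - f (Fin.last k) y)) = 0 := by
        intro y
        refine ih (fun j => f j.castSucc) (fun j j' h => ?_) (fun j => hfe _) n'
          (by omega) _ ?_
        · exact Fin.castSucc_injective k (hf h)
        · intro x'
          have h1 := hc (Fin.cons y x')
          have h2 := hc (Fin.cons e x')
          simp only [Fin.prod_univ_succ, Fin.cons_zero, Fin.cons_succ] at h1 h2
          have h2' : ∑ j : Fin (k+1), c j * ∏ t, f j (x' t) = 0 := by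
            rw [← h2]; exact Finset.sum_congr rfl fun j _ => by rw [hfe]; ring
          have expand : ∑ j : Fin (k+1),
              c j * ((f j y - f (Fin.last k) y) * ∏ t, f j (x' t))
              = (∑ j : Fin (k+1), c j * (f j y * ∏ t, f j (x' t)))
                - f (Fin.last k) y * ∑ j : Fin (k+1), c j * ∏ t, f j (x' t) := by
            rw [Finset.mul_sum, ← Finset.sum_sub_distrib]
            exact Finset.sum_congr rfl fun j _ => by ring
          rw [h1, h2', mul_zero, sub_zero] at expand
          rw [Fin.sum_univ_castSucc] at expand
          simp only [sub_self, zero_mul, mul_zero, add_zero] at expand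
          rw [← expand]
          exact Finset.sum_congr rfl fun j _ => by ring
      obtain ⟨y, hy⟩ : ∃ y, f i.castSucc y ≠ f (Fin.last k) y := by
        by_contra h
        push_neg at h
        exact (hf.ne (Fin.castSucc_lt_last i).ne) (funext h)
      have := key y i
      rcases mul_eq_zero.mp this with h | h
      · exact h
      · exact absurd (sub_eq_zero.mp h) hy
    have hlast : c (Fin.last k) = 0 := by
      have := hc (fun _ => e)
      simp only [hfe, Finset.prod_const_one, mul_one] at this
      rw [Fin.sum_univ_castSucc] at this
      simpa [Finset.sum_congr rfl fun i _ => hcast i] using this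
    intro i
    induction i using Fin.lastCases with
    | last => exact hlast
    | cast j => exact hcast j


/-- **Theorem 1 (identifiability).** If two mixtures of pairwise distinct probability
measures, with `l ≤ m` components respectively, have equal `(2m-1)`-fold product laws,
then they are the same mixture: `l = m` and the components and weights agree up to a
permutation. -/
theorem mixture_identifiable_of_eq_prod_law
    {Ω : Type*} [MeasurableSpace Ω] (l m : ℕ) (hl : 0 < l) (hlm : l ≤ m)
    (μ : Fin l → Measure Ω) (hμprob : ∀ i, IsProbabilityMeasure (μ i))
    (hμdist : Function.Injective μ)
    (a : Fin l → ℝ) (ha : ∀ i, 0 < a i) (hasum : ∑ i, a i = 1)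
    (ν : Fin m → Measure Ω) (hνprob : ∀ j, IsProbabilityMeasure (ν j))
    (hνdist : Function.Injective ν)
    (b : Fin m → ℝ) (hb : ∀ j, 0 < b j) (hbsum : ∑ j, b j = 1)
    (heq : ∑ i, ENNReal.ofReal (a i) • Measure.pi (fun _ : Fin (2 * m - 1) => μ i)
         = ∑ j, ENNReal.ofReal (b j) • Measure.pi (fun _ : Fin (2 * m - 1) => ν j)) :
    l = m ∧ ∃ ψ : Fin l ≃ Fin m, ∀ i, ν (ψ i) = μ i ∧ b (ψ i) = a i := by
  classical
  set X := {s : Set Ω // MeasurableSet s} with hX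
  set n := 2 * m - 1 with hn
  set F : Measure Ω → X → ℝ := fun ρ s => (ρ s.1).toReal with hF
  set S : Finset (Measure Ω) := (Finset.image μ Finset.univ) ∪ (Finset.image ν Finset.univ)
    with hS
  have hSprob : ∀ ρ ∈ S, IsProbabilityMeasure ρ := by
    intro ρ hρ
    rcases Finset.mem_union.mp hρ with h | h <;>
      obtain ⟨i, _, rfl⟩ := Finset.mem_image.mp h
    · exact hμprob i
    · exact hνprob i
  -- rectangle identity in ℝ
  have hrect : ∀ x : Fin n → X,
      ∑ i, a i * ∏ t, F (μ i) (x t) = ∑ j, b j * ∏ t, F (ν j) (x t) := by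
    intro x
    have hs : MeasurableSet (Set.univ.pi fun t => (x t).1) :=
      MeasurableSet.univ_pi fun t => (x t).2
    have h : (∑ i, ENNReal.ofReal (a i) • Measure.pi (fun _ : Fin n => μ i))
        (Set.univ.pi fun t => (x t).1)
        = (∑ j, ENNReal.ofReal (b j) • Measure.pi (fun _ : Fin n => ν j))
        (Set.univ.pi fun t => (x t).1) := by rw [heq]
    rw [Measure.finset_sum_apply, Measure.finset_sum_apply] at h
    have hL : ∀ i : Fin l, (ENNReal.ofReal (a i) • Measure.pi (fun _ : Fin n => μ i))
        (Set.univ.pi fun t => (x t).1) = ENNReal.ofReal (a i) * ∏ t, μ i (x t).1 := by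
      intro i
      haveI := hμprob i
      rw [Measure.smul_apply, smul_eq_mul, Measure.pi_pi]
    have hR : ∀ j : Fin m, (ENNReal.ofReal (b j) • Measure.pi (fun _ : Fin n => ν j))
        (Set.univ.pi fun t => (x t).1) = ENNReal.ofReal (b j) * ∏ t, ν j (x t).1 := by
      intro j
      haveI := hνprob j
      rw [Measure.smul_apply, smul_eq_mul, Measure.pi_pi]
    rw [Finset.sum_congr rfl fun i _ => hL i, Finset.sum_congr rfl fun j _ => hR j] at h
    have hLfin : ∀ i : Fin l, ENNReal.ofReal (a i) * ∏ t, μ i (x t).1 ≠ ⊤ := by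
      intro i
      haveI := hμprob i
      exact ENNReal.mul_ne_top ENNReal.ofReal_ne_top
        (ENNReal.prod_lt_top fun t _ => measure_lt_top _ _).ne
    have hRfin : ∀ j : Fin m, ENNReal.ofReal (b j) * ∏ t, ν j (x t).1 ≠ ⊤ := by
      intro j
      haveI := hνprob j
      exact ENNReal.mul_ne_top ENNReal.ofReal_ne_top
        (ENNReal.prod_lt_top fun t _ => measure_lt_top _ _).ne
    have h' := congrArg ENNReal.toReal h
    rw [ENNReal.toReal_sum fun i _ => hLfin i, ENNReal.toReal_sum fun j _ => hRfin j] at h'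
    calc ∑ i, a i * ∏ t, F (μ i) (x t)
        = ∑ i, (ENNReal.ofReal (a i) * ∏ t, μ i (x t).1).toReal := by
          refine Finset.sum_congr rfl fun i _ => ?_
          rw [ENNReal.toReal_mul, ENNReal.toReal_ofReal (ha i).le, ENNReal.toReal_prod]
      _ = ∑ j, (ENNReal.ofReal (b j) * ∏ t, ν j (x t).1).toReal := h'
      _ = ∑ j, b j * ∏ t, F (ν j) (x t) := by
          refine Finset.sum_congr rfl fun j _ => ?_
          rw [ENNReal.toReal_mul, ENNReal.toReal_ofReal (hb j).le, ENNReal.toReal_prod]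
  set A : Measure Ω → ℝ := fun ρ => ∑ i, if μ i = ρ then a i else 0 with hA
  set B : Measure Ω → ℝ := fun ρ => ∑ j, if ν j = ρ then b j else 0 with hB
  have hregroup : ∀ g : Measure Ω → ℝ,
      ∑ ρ ∈ S, (A ρ - B ρ) * g ρ = (∑ i, a i * g (μ i)) - (∑ j, b j * g (ν j)) := by
    intro g
    have h1 : ∑ ρ ∈ S, A ρ * g ρ = ∑ i, a i * g (μ i) := by
      simp only [hA, Finset.sum_mul, ite_mul, zero_mul]
      rw [Finset.sum_comm]
      refine Finset.sum_congr rfl fun i _ => ?_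
      rw [Finset.sum_ite_eq S (μ i) (fun ρ => a i * g ρ),
        if_pos (Finset.mem_union_left _ (Finset.mem_image_of_mem μ (Finset.mem_univ i)))]
    have h2 : ∑ ρ ∈ S, B ρ * g ρ = ∑ j, b j * g (ν j) := by
      simp only [hB, Finset.sum_mul, ite_mul, zero_mul]
      rw [Finset.sum_comm]
      refine Finset.sum_congr rfl fun j _ => ?_
      rw [Finset.sum_ite_eq S (ν j) (fun ρ => b j * g ρ),
        if_pos (Finset.mem_union_right _ (Finset.mem_image_of_mem ν (Finset.mem_univ j)))]
    rw [← h1, ← h2, ← Finset.sum_sub_distrib]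
    exact Finset.sum_congr rfl fun ρ _ => by ring
  set E : ↥S ≃ Fin S.card := S.equivFin with hE
  set f : Fin S.card → X → ℝ := fun i => F ((E.symm i : ↥S) : Measure Ω) with hf
  set c : Fin S.card → ℝ := fun i =>
    A ((E.symm i : ↥S) : Measure Ω) - B ((E.symm i : ↥S) : Measure Ω) with hc
  have hfinj : Function.Injective f := by
    intro i i' h
    have hmeas : ((E.symm i : ↥S) : Measure Ω) = ((E.symm i' : ↥S) : Measure Ω) := by
      haveI := hSprob _ (E.symm i).2
      haveI := hSprob _ (E.symm i').2
      refine Measure.ext fun s hs => ?_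
      have := congrFun h (⟨s, hs⟩ : X)
      simpa [hf, hF] using
        (ENNReal.toReal_eq_toReal_iff' (measure_ne_top _ _) (measure_ne_top _ _)).mp this
    have : E.symm i = E.symm i' := Subtype.ext hmeas
    simpa using congrArg E this
  have hfe : ∀ i, f i (⟨Set.univ, MeasurableSet.univ⟩ : X) = 1 := by
    intro i
    haveI := hSprob _ (E.symm i).2
    simp [hf, hF]
  have hcard : S.card ≤ n + 1 := by
    have h1 : S.card ≤ (Finset.image μ (Finset.univ : Finset (Fin l))).card
        + (Finset.image ν (Finset.univ : Finset (Fin m))).card := Finset.card_union_le _ _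
    have h2 := Finset.card_image_le (s := (Finset.univ : Finset (Fin l))) (f := μ)
    have h3 := Finset.card_image_le (s := (Finset.univ : Finset (Fin m))) (f := ν)
    simp only [Finset.card_univ, Fintype.card_fin] at h2 h3
    omega
  have hczero : ∀ x : Fin n → X, ∑ i, c i * ∏ t, f i (x t) = 0 := by
    intro x
    have hsum : ∑ i, c i * ∏ t, f i (x t)
        = ∑ ρ ∈ S, (A ρ - B ρ) * ∏ t, F ρ (x t) := by
      rw [← Equiv.sum_comp E (fun i => c i * ∏ t, f i (x t)), ← Finset.sum_attach S
        (fun ρ => (A ρ - B ρ) * ∏ t, F ρ (x t))]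
      refine Finset.sum_congr rfl fun ρ _ => ?_
      simp [hc, hf]
    rw [hsum, hregroup, hrect x, sub_self]
  have hAB : ∀ ρ ∈ S, A ρ = B ρ := by
    intro ρ hρ
    have h0 := tensor_indep (⟨Set.univ, MeasurableSet.univ⟩ : X) S.card f hfinj hfe n
      hcard c hczero (E ⟨ρ, hρ⟩)
    simp only [hc, Equiv.symm_apply_apply] at h0
    exact sub_eq_zero.mp h0
  have hAμ : ∀ i, A (μ i) = a i := by
    intro i
    simp only [hA, hμdist.eq_iff]
    simp
  have hBν : ∀ j, B (ν j) = b j := by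
    intro j
    simp only [hB, hνdist.eq_iff]
    simp
  have key : ∀ i : Fin l, ∃ j : Fin m, ν j = μ i ∧ b j = a i := by
    intro i
    have hmem : μ i ∈ S := Finset.mem_union_left _ (Finset.mem_image_of_mem μ (Finset.mem_univ i))
    have h1 : B (μ i) = a i := by rw [← hAB _ hmem, hAμ]
    have hex : ∃ j, ν j = μ i := by
      by_contra h
      push_neg at h
      have : B (μ i) = 0 := Finset.sum_eq_zero fun j _ => if_neg (h j)
      rw [this] at h1
      exact absurd h1.symm (ha i).ne'
    obtain ⟨j, hj⟩ := hex
    refine ⟨j, hj, ?_⟩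
    rw [← h1, ← hj, hBν]
  have key' : ∀ j : Fin m, ∃ i : Fin l, μ i = ν j := by
    intro j
    have hmem : ν j ∈ S := Finset.mem_union_right _ (Finset.mem_image_of_mem ν (Finset.mem_univ j))
    have h1 : A (ν j) = b j := by rw [hAB _ hmem, hBν]
    by_contra h
    push_neg at h
    have : A (ν j) = 0 := Finset.sum_eq_zero fun i _ => if_neg (h i)
    rw [this] at h1
    exact absurd h1.symm (hb j).ne'
  set ψ : Fin l → Fin m := fun i => (key i).choose with hψ
  have hψν : ∀ i, ν (ψ i) = μ i := fun i => ((key i).choose_spec).1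
  have hψb : ∀ i, b (ψ i) = a i := fun i => ((key i).choose_spec).2
  have hψbij : Function.Bijective ψ := by
    constructor
    · intro i i' h
      apply hμdist
      rw [← hψν i, ← hψν i', h]
    · intro j
      obtain ⟨i, hi⟩ := key' j
      refine ⟨i, hνdist ?_⟩
      rw [hψν i, hi]
  have hcard' : l = m := by
    have := Fintype.card_of_bijective hψbij
    simpa using this
  exact ⟨hcard', Equiv.ofBijective ψ hψbij, fun i => ⟨hψν i, hψb i⟩⟩
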